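/- For every s > 0 and every t > 1, average-case L₂-approximation with Gaussian kernels is EC-(s,t)-weakly tractable for all nonincreasing sequences of positive shape parameters. -/

import Mathlib

set_option maxHeartbeats 1000000

open Filter

/-- `omegaOf x` is `ω` for shape parameter squared `x = γ²`:
`ω = 2γ²/(1+2γ²+√(1+4γ²))`. -/
noncomputable def omegaOf (x : ℝ) : ℝ := 2 * x / (1 + 2 * x + Real.sqrt (1 + 4 * x))

/-- Eigenvalues `λ_d(j) = ∏_{k=1}^d (1-ω_k) ω_k^{j_k}`, where `g k = γ_{k+1}²`. -/
noncomputable def eigen (g : ℕ → ℝ) (d : ℕ) (j : Fin d → ℕ) : ℝ :=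
  ∏ k : Fin d, (1 - omegaOf (g (k : ℕ))) * omegaOf (g (k : ℕ)) ^ (j k)

/-- The information complexity `n(ε,d)`: the least `n` such that some finite set `S` of
multi-indices with `|S| ≤ n` satisfies `∑_{j ∉ S} λ_d(j) ≤ ε²`. -/
noncomputable def infoComp (g : ℕ → ℝ) (ε : ℝ) (d : ℕ) : ℕ :=
  sInf {n : ℕ | ∃ S : Finset (Fin d → ℕ), S.card ≤ n ∧
    (∑' j : {j : Fin d → ℕ // j ∉ S}, eigen g d j.1) ≤ ε ^ 2}

/-- EC-`(s,t)`-weak tractability: `lim_{ε⁻¹+d→∞} ln n(ε,d) / ((1+ln ε⁻¹)^s + d^t) = 0`. -/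
def ECWeakTract (g : ℕ → ℝ) (s t : ℝ) : Prop :=
  ∀ η : ℝ, 0 < η → ∃ M : ℝ, ∀ (d : ℕ) (ε : ℝ), 1 ≤ d → 0 < ε → ε < 1 →
    M ≤ ε⁻¹ + d →
      Real.log (infoComp g ε d : ℝ) ≤ η * ((1 + Real.log ε⁻¹) ^ s + (d : ℝ) ^ t)

lemma sqrt_one_le {x : ℝ} (hx : 0 < x) : 1 ≤ Real.sqrt (1 + 4 * x) := by
  have h1 : Real.sqrt (1 + 4 * x) ^ 2 = 1 + 4 * x := Real.sq_sqrt (by linarith)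
  nlinarith [Real.sqrt_nonneg (1 + 4 * x)]

lemma omegaOf_pos {x : ℝ} (hx : 0 < x) : 0 < omegaOf x := by
  have h := sqrt_one_le hx
  exact div_pos (by linarith) (by linarith)

lemma omegaOf_lt_one {x : ℝ} (hx : 0 < x) : omegaOf x < 1 := by
  have h := sqrt_one_le hx
  rw [omegaOf, div_lt_one (by linarith)]
  linarith

lemma omegaOf_eq {x : ℝ} (hx : 0 < x) :
    omegaOf x = (Real.sqrt (1 + 4 * x) - 1) / (Real.sqrt (1 + 4 * x) + 1) := by
  have h := sqrt_one_le hx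
  have hsq : Real.sqrt (1 + 4 * x) ^ 2 = 1 + 4 * x := Real.sq_sqrt (by linarith)
  rw [omegaOf, div_eq_div_iff (by linarith) (by linarith)]
  nlinarith [hsq]

lemma omegaOf_mono {x y : ℝ} (hx : 0 < x) (hxy : x ≤ y) : omegaOf x ≤ omegaOf y := by
  have hy : 0 < y := lt_of_lt_of_le hx hxy
  have hux := sqrt_one_le hx
  have huy := sqrt_one_le hy
  have huv : Real.sqrt (1 + 4 * x) ≤ Real.sqrt (1 + 4 * y) :=
    Real.sqrt_le_sqrt (by linarith)
  rw [omegaOf_eq hx, omegaOf_eq hy, div_le_div_iff₀ (by linarith) (by linarith)]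
  nlinarith

lemma pi_summable : ∀ (d : ℕ) (F : Fin d → ℕ → ℝ), (∀ k, Summable (F k)) →
    (∀ k n, 0 ≤ F k n) →
    Summable (fun j : Fin d → ℕ => ∏ k, F k (j k)) ∧
    (∑' j : Fin d → ℕ, ∏ k, F k (j k)) = ∏ k, ∑' n, F k n := by
  intro d
  induction d with
  | zero =>
    intro F _ _
    constructor
    · exact Summable.of_finite
    · simp [tsum_fintype]
  | succ d ih =>
    intro F hF hnn
    obtain ⟨ihs, iht⟩ := ih (fun k => F k.succ) (fun k => hF k.succ) (fun k => hnn k.succ)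
    set e : ℕ × (Fin d → ℕ) ≃ (Fin (d+1) → ℕ) := Fin.consEquiv (fun _ => ℕ) with he
    have hkey : ∀ p : ℕ × (Fin d → ℕ),
        (∏ k, F k ((e p) k)) = F 0 p.1 * ∏ k : Fin d, F k.succ (p.2 k) := by
      intro p
      rw [Fin.prod_univ_succ]
      simp [he, Fin.consEquiv]
    have hG : Summable (fun p : ℕ × (Fin d → ℕ) => F 0 p.1 * ∏ k : Fin d, F k.succ (p.2 k)) :=
      Summable.mul_of_nonneg (f := F 0)
        (g := fun j : Fin d → ℕ => ∏ k : Fin d, F k.succ (j k)) (hF 0) ihs (fun n => hnn 0 n)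
        (fun j => Finset.prod_nonneg fun k _ => hnn k.succ (j k))
    have hsum : Summable (fun j : Fin (d+1) → ℕ => ∏ k, F k (j k)) := by
      rw [← e.summable_iff]
      exact hG.congr (fun p => (hkey p).symm)
    refine ⟨hsum, ?_⟩
    have h1 : (∑' j : Fin (d+1) → ℕ, ∏ k, F k (j k))
        = ∑' p : ℕ × (Fin d → ℕ), F 0 p.1 * ∏ k : Fin d, F k.succ (p.2 k) := by
      rw [← e.tsum_eq]
      exact tsum_congr hkey
    rw [h1, hG.tsum_prod]
    simp_rw [tsum_mul_left, tsum_mul_right]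
    rw [iht, Fin.prod_univ_succ]

lemma weier {ι : Type*} (S : Finset ι) (f : ι → ℝ) (h0 : ∀ i ∈ S, 0 ≤ f i)
    (h1 : ∀ i ∈ S, f i ≤ 1) : 1 - ∑ i ∈ S, f i ≤ ∏ i ∈ S, (1 - f i) := by
  induction S using Finset.cons_induction with
  | empty => simp
  | cons a s ha ih =>
    rw [Finset.sum_cons, Finset.prod_cons]
    have h0a := h0 a (Finset.mem_cons_self a s)
    have h1a := h1 a (Finset.mem_cons_self a s)
    have ih' := ih (fun i hi => h0 i (Finset.mem_cons_of_mem hi))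
      (fun i hi => h1 i (Finset.mem_cons_of_mem hi))
    have hsnn : (0:ℝ) ≤ ∑ i ∈ s, f i :=
      Finset.sum_nonneg fun i hi => h0 i (Finset.mem_cons_of_mem hi)
    nlinarith [mul_le_mul_of_nonneg_left ih' (by linarith : (0:ℝ) ≤ 1 - f a)]

lemma infoComp_le (g : ℕ → ℝ) (hpos : ∀ j, 0 < g j) (hanti : Antitone g) (d : ℕ) (ε : ℝ)
    (m : ℕ) (hm : (d : ℝ) * omegaOf (g 0) ^ m ≤ ε ^ 2) : infoComp g ε d ≤ m ^ d := by
  have hw0 : ∀ k : Fin d, 0 < omegaOf (g (k : ℕ)) := fun k => omegaOf_pos (hpos k)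
  have hw1 : ∀ k : Fin d, omegaOf (g (k : ℕ)) < 1 := fun k => omegaOf_lt_one (hpos k)
  have hwW : ∀ k : Fin d, omegaOf (g (k : ℕ)) ≤ omegaOf (g 0) :=
    fun k => omegaOf_mono (hpos k) (hanti (Nat.zero_le _))
  set F : Fin d → ℕ → ℝ :=
    fun k n => (1 - omegaOf (g (k : ℕ))) * omegaOf (g (k : ℕ)) ^ n with hFdef
  have hFs : ∀ k, Summable (F k) := fun k =>
    (summable_geometric_of_lt_one (hw0 k).le (hw1 k)).mul_left _
  have hFnn : ∀ k n, 0 ≤ F k n := fun k n =>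
    mul_nonneg (by linarith [hw1 k]) (pow_nonneg (hw0 k).le n)
  have hFt : ∀ k, (∑' n, F k n) = 1 := by
    intro k
    rw [hFdef]
    rw [tsum_mul_left, tsum_geometric_of_lt_one (hw0 k).le (hw1 k)]
    exact mul_inv_cancel₀ (by linarith [hw1 k])
  obtain ⟨hsum, htot⟩ := pi_summable d F hFs hFnn
  have heig : eigen g d = fun j => ∏ k, F k (j k) := rfl
  have htot1 : (∑' j : Fin d → ℕ, eigen g d j) = 1 := by
    rw [heig, htot]
    simp [hFt]
  set S : Finset (Fin d → ℕ) := Fintype.piFinset (fun _ : Fin d => Finset.range m) with hSdef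
  have hcard : S.card = m ^ d := by
    simp [hSdef, Fintype.card_piFinset]
  have hpart : ∑ j ∈ S, eigen g d j = ∏ k : Fin d, (1 - omegaOf (g (k : ℕ)) ^ m) := by
    rw [heig, hSdef, ← Finset.prod_univ_sum]
    refine Finset.prod_congr rfl fun k _ => ?_
    rw [hFdef, ← Finset.mul_sum, geom_sum_eq (hw1 k).ne m]
    have : omegaOf (g (k : ℕ)) - 1 ≠ 0 := by
      have := hw1 k; intro h; apply this.ne; linarith
    field_simp
    ring
  have hcompl := Summable.sum_add_tsum_compl (s := S) (f := eigen g d) (hsum.congr fun j => rfl)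
  have htail : (∑' x : ↑((S : Set (Fin d → ℕ)))ᶜ, eigen g d x)
      = 1 - ∏ k : Fin d, (1 - omegaOf (g (k : ℕ)) ^ m) := by
    rw [← hpart]
    rw [htot1] at hcompl
    linarith
  have hwei : 1 - ∑ k : Fin d, omegaOf (g (k : ℕ)) ^ m
      ≤ ∏ k : Fin d, (1 - omegaOf (g (k : ℕ)) ^ m) :=
    weier Finset.univ _ (fun k _ => pow_nonneg (hw0 k).le m)
      (fun k _ => pow_le_one₀ (hw0 k).le (hw1 k).le)
  have hsumW : ∑ k : Fin d, omegaOf (g (k : ℕ)) ^ m ≤ (d : ℝ) * omegaOf (g 0) ^ m := by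
    calc ∑ k : Fin d, omegaOf (g (k : ℕ)) ^ m
        ≤ ∑ _k : Fin d, omegaOf (g 0) ^ m :=
          Finset.sum_le_sum fun k _ => pow_le_pow_left₀ (hw0 k).le (hwW k) m
      _ = (d : ℝ) * omegaOf (g 0) ^ m := by simp [mul_comm]
  have htail2 : (∑' x : ↑((S : Set (Fin d → ℕ)))ᶜ, eigen g d x) ≤ ε ^ 2 := by
    rw [htail]; linarith
  have hbridge : (∑' j : {j : Fin d → ℕ // j ∉ S}, eigen g d j.1)
      = ∑' x : ↑((S : Set (Fin d → ℕ)))ᶜ, eigen g d x := by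
    refine Equiv.tsum_eq (Equiv.subtypeEquivRight ?_) (fun x => eigen g d x.1) |>.symm ▸ ?_
    · intro j; simp [Set.mem_compl_iff]
    · rfl
  apply Nat.sInf_le
  exact ⟨S, le_of_eq hcard, by rw [hbridge]; exact htail2⟩

lemma log_le_rpow_div {y δ : ℝ} (hy : 0 < y) (hδ : 0 < δ) :
    Real.log y ≤ y ^ δ / δ := by
  have h1 : Real.log (y ^ δ) ≤ y ^ δ - 1 :=
    Real.log_le_sub_one_of_pos (Real.rpow_pos_of_pos hy δ)
  rw [Real.log_rpow hy] at h1
  rw [le_div_iff₀ hδ, mul_comm]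
  linarith

lemma mul_le_rpow_aux {a b p q : ℝ} (ha : 1 ≤ a) (hb0 : 0 ≤ b) (hp : 0 < p) (hq : 0 < q)
    (hpq : 1 / p + 1 / q ≤ 1) (h : b ^ q ≤ a ^ p) : a * b ≤ a ^ p := by
  have ha0 : (0:ℝ) ≤ a := by linarith
  have hb' : b ≤ a ^ (p / q) := by
    have hbq : (b ^ q) ^ (1 / q) = b := by
      rw [← Real.rpow_mul hb0, mul_one_div, div_self hq.ne', Real.rpow_one]
    have hap : (a ^ p) ^ (1 / q) = a ^ (p / q) := by
      rw [← Real.rpow_mul ha0, mul_one_div]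
    rw [← hbq, ← hap]
    exact Real.rpow_le_rpow (Real.rpow_nonneg hb0 q) h (by positivity)
  have h2 : 1 + p / q ≤ p := by
    have h3 : p * (1 / p + 1 / q) ≤ p * 1 := mul_le_mul_of_nonneg_left hpq hp.le
    rw [mul_add, mul_one_div, div_self hp.ne', mul_one_div, mul_one] at h3
    linarith
  calc a * b ≤ a * a ^ (p / q) := by
        exact mul_le_mul_of_nonneg_left hb' (by linarith)
    _ = a ^ (1 + p / q) := by
        rw [Real.rpow_add (by linarith), Real.rpow_one]
    _ ≤ a ^ p := Real.rpow_le_rpow_of_exponent_le ha h2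

lemma ab_le_rpow_add {a b p q : ℝ} (ha : 1 ≤ a) (hb : 1 ≤ b) (hp : 0 < p) (hq : 0 < q)
    (hpq : 1 / p + 1 / q ≤ 1) : a * b ≤ a ^ p + b ^ q := by
  rcases le_total (b ^ q) (a ^ p) with h | h
  · have := mul_le_rpow_aux ha (by linarith : (0:ℝ) ≤ b) hp hq hpq h
    have hbq : (0:ℝ) ≤ b ^ q := Real.rpow_nonneg (by linarith) q
    linarith
  · have := mul_le_rpow_aux hb (by linarith : (0:ℝ) ≤ a) hq hp (by linarith) h
    have hap : (0:ℝ) ≤ a ^ p := Real.rpow_nonneg (by linarith) p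
    nlinarith
lemma final_step {s t K₁ K₂ η : ℝ} (hs : 0 < s) (ht : 1 < t) (hK₁ : 0 < K₁)
    (hK₂ : 0 < K₂) (hη : 0 < η) :
    ∃ M : ℝ, ∀ D L : ℝ, 1 ≤ D → 0 < L → M ≤ Real.exp L + D →
      K₁ * D ^ ((t+1)/2) + K₂ * (1+L) ^ (s/2) ≤ η * ((1+L) ^ s + D ^ t) := by
  set δd := (t-1)/2 with hδddef
  have hδd : 0 < δd := by simp only [hδddef]; linarith
  set Bc := (max ((2*K₁/η) ^ (2/(t-1))) 1) ^ ((t+1)/2) with hBcdef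
  have thalf : Tendsto (fun M : ℝ => M / 2) atTop atTop :=
    Tendsto.atTop_div_const two_pos tendsto_id
  have h1 : ∀ᶠ M : ℝ in atTop, (2:ℝ) ≤ M := eventually_ge_atTop 2
  have h2 : ∀ᶠ M : ℝ in atTop, 4*K₂^2/η^2 ≤ (M/2) ^ t :=
    ((tendsto_rpow_atTop (by linarith : (0:ℝ) < t)).comp thalf).eventually_ge_atTop _
  have h4 : ∀ᶠ M : ℝ in atTop, 2*K₁/η ≤ (M/2) ^ δd :=
    ((tendsto_rpow_atTop hδd).comp thalf).eventually_ge_atTop _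
  have h1L : Tendsto (fun M : ℝ => 1 + Real.log (M/2)) atTop atTop :=
    tendsto_atTop_add_const_left _ 1 (Real.tendsto_log_atTop.comp thalf)
  have h3 : ∀ᶠ M : ℝ in atTop, 2*K₂/η ≤ (1 + Real.log (M/2)) ^ (s/2) :=
    ((tendsto_rpow_atTop (by linarith : (0:ℝ) < s/2)).comp h1L).eventually_ge_atTop _
  have h5 : ∀ᶠ M : ℝ in atTop, 2*K₁*Bc/η ≤ (1 + Real.log (M/2)) ^ s :=
    ((tendsto_rpow_atTop hs).comp h1L).eventually_ge_atTop _
  obtain ⟨M, hM1, hM2, hM3, hM4, hM5⟩ := (h1.and (h2.and (h3.and (h4.and h5)))).exists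
  refine ⟨M, ?_⟩
  intro D L hD hL hMle
  have hD0 : (0:ℝ) < D := by linarith
  have h1L0 : (0:ℝ) < 1 + L := by linarith
  set A := (1+L) ^ (s/2) with hAdef
  have hA1 : 1 ≤ A := Real.one_le_rpow (by linarith) (by positivity)
  have hAsq : A * A = (1+L) ^ s := by
    rw [hAdef, ← Real.rpow_add h1L0]
    norm_num
  have hDt : D ^ t = D ^ ((t+1)/2) * D ^ δd := by
    rw [← Real.rpow_add hD0, hδddef]
    congr 1; ring
  have hDt1 : (0:ℝ) < D ^ ((t+1)/2) := Real.rpow_pos_of_pos hD0 _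
  have hDtpos : (0:ℝ) < D ^ t := Real.rpow_pos_of_pos hD0 _
  have hApos : (0:ℝ) < A := by linarith
  have hM20 : (0:ℝ) ≤ M / 2 := by linarith
  -- goal reduction
  have key1 : K₂ * A ≤ η/2 * ((1+L) ^ s + D ^ t) → K₁ * D ^ ((t+1)/2) ≤ η/2 * ((1+L) ^ s + D ^ t)
      → K₁ * D ^ ((t+1)/2) + K₂ * A ≤ η * ((1+L) ^ s + D ^ t) := by
    intro hx hy; linarith
  have G1ofA : 2*K₂/η ≤ A → K₂ * A ≤ η/2 * ((1+L) ^ s + D ^ t) := by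
    intro hA2
    have hK2le : K₂ ≤ η/2 * A := by
      have e1 : η/2 * (2*K₂/η) = K₂ := by field_simp
      have e2 := mul_le_mul_of_nonneg_left hA2 (by linarith : (0:ℝ) ≤ η/2)
      linarith
    have h' : K₂ * A ≤ (η/2 * A) * A := mul_le_mul_of_nonneg_right hK2le hApos.le
    have h'' : (η/2 * A) * A = η/2 * ((1+L) ^ s) := by rw [mul_assoc, hAsq]
    nlinarith [hDtpos.le]
  have G2of : 2*K₁/η ≤ D ^ δd → K₁ * D ^ ((t+1)/2) ≤ η/2 * ((1+L) ^ s + D ^ t) := by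
    intro hKd
    have hKd' : K₁ ≤ η/2 * D ^ δd := by
      have e1 : η/2 * (2*K₁/η) = K₁ := by field_simp
      have e2 := mul_le_mul_of_nonneg_left hKd (by linarith : (0:ℝ) ≤ η/2)
      linarith
    have h' : K₁ * D ^ ((t+1)/2) ≤ (η/2 * D ^ δd) * D ^ ((t+1)/2) :=
      mul_le_mul_of_nonneg_right hKd' hDt1.le
    have h'' : (η/2 * D ^ δd) * D ^ ((t+1)/2) = η/2 * D ^ t := by
      rw [hDt]; ring
    rw [h''] at h'
    nlinarith [Real.rpow_nonneg h1L0.le s]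
  rcases le_or_gt (M/2) D with hcase | hcase
  · -- D is large
    have hDdt : (M/2) ^ δd ≤ D ^ δd := Real.rpow_le_rpow hM20 hcase hδd.le
    have hDtt : (M/2) ^ t ≤ D ^ t := Real.rpow_le_rpow hM20 hcase (by linarith)
    apply key1
    · rcases le_or_gt (2*K₂/η) A with hA2 | hA2
      · exact G1ofA hA2
      · have h' : K₂ * A ≤ 2*K₂^2/η := by
          have e1 : K₂ * (2*K₂/η) = 2*K₂^2/η := by field_simp
          have e2 := mul_le_mul_of_nonneg_left hA2.le hK₂.le
          linarith
        have h'' : 2*K₂^2/η ≤ η/2 * D ^ t := by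
          have e1 : η/2 * (4*K₂^2/η^2) = 2*K₂^2/η := by field_simp; ring
          have e2 := mul_le_mul_of_nonneg_left (le_trans hM2 hDtt) (by linarith : (0:ℝ) ≤ η/2)
          linarith
        nlinarith [Real.rpow_nonneg h1L0.le s]
    · exact G2of (le_trans hM4 hDdt)
  · -- ε⁻¹ is large
    have hexpM : M/2 ≤ Real.exp L := by linarith
    have hlogM : Real.log (M/2) ≤ L := by
      have h := Real.log_le_log (by linarith : (0:ℝ) < M/2) hexpM
      rwa [Real.log_exp] at h
    have hlM0 : (0:ℝ) ≤ Real.log (M/2) := Real.log_nonneg (by linarith)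
    have hbase : (0:ℝ) ≤ 1 + Real.log (M/2) := by linarith
    have hAA : (1 + Real.log (M/2)) ^ (s/2) ≤ A :=
      Real.rpow_le_rpow hbase (by linarith) (by positivity)
    have hAs : (1 + Real.log (M/2)) ^ s ≤ (1+L) ^ s :=
      Real.rpow_le_rpow hbase (by linarith) hs.le
    apply key1
    · exact G1ofA (le_trans hM3 hAA)
    · rcases le_or_gt (2*K₁/η) (D ^ δd) with hKd | hKd
      · exact G2of hKd
      · have hexp : (D ^ δd) ^ (2/(t-1)) = D := by
          rw [← Real.rpow_mul hD0.le]
          have e1 : δd * (2/(t-1)) = 1 := by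
            rw [hδddef]; field_simp; exact div_self (sub_ne_zero.mpr (ne_of_gt ht))
          rw [e1, Real.rpow_one]
        have hDle : D ≤ (2*K₁/η) ^ (2/(t-1)) := by
          rw [← hexp]
          exact Real.rpow_le_rpow (Real.rpow_nonneg hD0.le _) hKd.le
            (div_pos two_pos (by linarith : (0:ℝ) < t - 1)).le
        have hDle' : D ≤ max ((2*K₁/η) ^ (2/(t-1))) 1 := le_trans hDle (le_max_left _ _)
        have hDt1le : D ^ ((t+1)/2) ≤ Bc := by
          rw [hBcdef]
          exact Real.rpow_le_rpow hD0.le hDle' (by linarith)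
        have hBc0 : (0:ℝ) < Bc :=
          Real.rpow_pos_of_pos (lt_of_lt_of_le one_pos (le_max_right _ _)) _
        have h5' : K₁ * Bc ≤ η/2 * (1 + Real.log (M/2)) ^ s := by
          have e1 : η/2 * (2*K₁*Bc/η) = K₁ * Bc := by field_simp
          have e2 := mul_le_mul_of_nonneg_left hM5 (by linarith : (0:ℝ) ≤ η/2)
          linarith
        have h6 : K₁ * D ^ ((t+1)/2) ≤ K₁ * Bc :=
          mul_le_mul_of_nonneg_left hDt1le hK₁.le
        have h7 : η/2 * (1 + Real.log (M/2)) ^ s ≤ η/2 * (1+L) ^ s :=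
          mul_le_mul_of_nonneg_left hAs (by linarith)
        nlinarith [hDtpos.le]

/-- For every `s > 0` and `t > 1`, EC-`(s,t)`-weak tractability holds for all nonincreasing
sequences of positive shape parameters. -/
theorem stmt6 (s t : ℝ) (hs : 0 < s) (ht : 1 < t)
    (g : ℕ → ℝ) (hpos : ∀ j, 0 < g j) (hanti : Antitone g) :
    ECWeakTract g s t := by
  intro η hη
  have hW0 : 0 < omegaOf (g 0) := omegaOf_pos (hpos 0)
  have hW1 : omegaOf (g 0) < 1 := omegaOf_lt_one (hpos 0)
  set c := -Real.log (omegaOf (g 0)) with hcdef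
  have hc : 0 < c := by
    rw [hcdef]
    have := Real.log_neg hW0 hW1
    linarith
  set C₀ : ℝ := 2/c + 2 with hC₀def
  have hC₀ : 1 ≤ C₀ := by
    rw [hC₀def]
    have h2c : 0 < 2/c := by positivity
    linarith
  set K := Real.log C₀ with hKdef
  have hK : 0 ≤ K := Real.log_nonneg hC₀
  have ht₁ : 1 < (t+1)/2 := by linarith
  have ht₁0 : 0 < (t+1)/2 := by linarith
  set r₁ := ((t+1)/2)/((t+1)/2 - 1) with hr₁def
  have hr₁pos : 0 < r₁ := by
    rw [hr₁def]
    exact div_pos (by linarith) (by linarith)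
  set δL := s/(2*r₁) with hδLdef
  have hδL : 0 < δL := by
    rw [hδLdef]
    exact div_pos hs (by linarith)
  set δd := (t-1)/2 with hδddef
  have hδd : 0 < δd := by
    rw [hδddef]; linarith
  set K₁ := K + (2:ℝ)^δd/δd + 1/δL with hK₁def
  have h2δ : 0 < (2:ℝ)^δd := Real.rpow_pos_of_pos two_pos δd
  have hK₁ : 0 < K₁ := by
    rw [hK₁def]
    have h1 : 0 < (2:ℝ)^δd/δd := by positivity
    have h2 : 0 < 1/δL := by positivity
    linarith
  set K₂ := 1/δL with hK₂def
  have hK₂ : 0 < K₂ := by rw [hK₂def]; positivity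
  obtain ⟨M, hM⟩ := final_step hs ht hK₁ hK₂ hη
  refine ⟨M, ?_⟩
  intro d ε hd hε0 hε1 hMle
  set L := Real.log ε⁻¹ with hLdef
  have hL : 0 < L := Real.log_pos ((one_lt_inv₀ hε0).mpr hε1)
  have hexpL : Real.exp L = ε⁻¹ := Real.exp_log (by positivity)
  have hD1 : (1:ℝ) ≤ (d:ℝ) := by exact_mod_cast hd
  have hD0 : (0:ℝ) < (d:ℝ) := by linarith
  have hlogD : 0 ≤ Real.log d := Real.log_nonneg hD1
  set x := (Real.log d + 2*L)/c with hxdef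
  have hx0 : 0 ≤ x := by
    rw [hxdef]
    exact div_nonneg (by linarith) hc.le
  set m := ⌈x⌉₊ + 1 with hmdef
  have hm1 : 1 ≤ m := Nat.le_add_left 1 _
  have hmR1 : (1:ℝ) ≤ (m:ℝ) := by exact_mod_cast hm1
  have hmgex : x ≤ (m:ℝ) := by
    have h := Nat.le_ceil x
    rw [hmdef]
    push_cast
    linarith
  have hmlex : (m:ℝ) ≤ x + 2 := by
    have h := Nat.ceil_lt_add_one hx0
    rw [hmdef]
    push_cast
    linarith
  -- Step A : the tail bound holds for this m
  have hWm : (d:ℝ) * omegaOf (g 0) ^ m ≤ ε ^ 2 := by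
    have hmc : Real.log d + 2*L ≤ (m:ℝ) * c := by
      rw [hxdef] at hmgex
      have h := (div_le_iff₀ hc).mp hmgex
      linarith
    have hWmlog : omegaOf (g 0) ^ m = Real.exp ((m:ℝ) * Real.log (omegaOf (g 0))) := by
      rw [Real.exp_nat_mul, Real.exp_log hW0]
    have hmono : Real.exp ((m:ℝ) * Real.log (omegaOf (g 0)))
        ≤ Real.exp (-(Real.log d + 2*L)) := by
      apply Real.exp_le_exp.mpr
      have he : (m:ℝ) * Real.log (omegaOf (g 0)) = -((m:ℝ) * c) := by
        rw [hcdef]; ring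
      rw [he]
      linarith
    have hval : Real.exp (-(Real.log d + 2*L)) = (d:ℝ)⁻¹ * ε^2 := by
      rw [show -(Real.log (d:ℝ) + 2*L) = (-Real.log (d:ℝ)) + ((-L) + (-L)) by ring,
        Real.exp_add, Real.exp_add, Real.exp_neg, Real.exp_neg,
        Real.exp_log hD0, hexpL, inv_inv]
      ring
    calc (d:ℝ) * omegaOf (g 0) ^ m
        = (d:ℝ) * Real.exp ((m:ℝ) * Real.log (omegaOf (g 0))) := by rw [hWmlog]
      _ ≤ (d:ℝ) * ((d:ℝ)⁻¹ * ε^2) := by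
          rw [← hval]
          exact mul_le_mul_of_nonneg_left hmono (by positivity)
      _ = ε^2 := by field_simp
  have hIC : infoComp g ε d ≤ m ^ d := infoComp_le g hpos hanti d ε m hWm
  -- Step B : take logarithms
  have hlogIC : Real.log (infoComp g ε d : ℝ) ≤ (d:ℝ) * Real.log m := by
    rcases Nat.eq_zero_or_pos (infoComp g ε d) with h0 | hpos'
    · rw [h0]
      simp only [Nat.cast_zero, Real.log_zero]
      exact mul_nonneg (by positivity) (Real.log_nonneg hmR1)
    · have h1 : Real.log (infoComp g ε d : ℝ) ≤ Real.log ((m:ℝ) ^ d) := by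
        apply Real.log_le_log (by exact_mod_cast hpos')
        exact_mod_cast hIC
      rwa [Real.log_pow] at h1
  -- Step C : bound log m
  have hlogm : Real.log m ≤ K + Real.log (1 + Real.log d) + Real.log (1 + L) := by
    have hP1 : (1:ℝ) ≤ 1 + Real.log d := by linarith
    have hP2 : (1:ℝ) ≤ 1 + L := by linarith
    have hmC : (m:ℝ) ≤ C₀ * ((1 + Real.log d) * (1 + L)) := by
      have hPge : Real.log d + 2*L ≤ 2 * ((1 + Real.log d) * (1 + L)) := by nlinarith
      have h2P : (2:ℝ) ≤ 2 * ((1 + Real.log d) * (1 + L)) := by nlinarith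
      have hdiv : x ≤ (2/c) * ((1 + Real.log d) * (1 + L)) := by
        rw [hxdef]
        rw [div_le_iff₀ hc]
        have hfc : (2/c) * ((1 + Real.log d) * (1 + L)) * c
            = 2 * ((1 + Real.log d) * (1 + L)) := by
          field_simp
        rw [hfc]
        exact hPge
      have hexpand : C₀ * ((1 + Real.log d) * (1 + L))
          = (2/c) * ((1 + Real.log d) * (1 + L)) + 2 * ((1 + Real.log d) * (1 + L)) := by
        rw [hC₀def]; ring
      rw [hexpand]
      linarith
    have hlog1 : Real.log m ≤ Real.log (C₀ * ((1 + Real.log d) * (1 + L))) :=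
      Real.log_le_log (by positivity) hmC
    rw [Real.log_mul (by positivity) (by positivity),
      Real.log_mul (by positivity) (by positivity)] at hlog1
    rw [hKdef]
    linarith
  -- Step D : the three term bounds
  have hdd : (d:ℝ) ≤ (d:ℝ) ^ ((t+1)/2) := by
    calc (d:ℝ) = (d:ℝ) ^ (1:ℝ) := (Real.rpow_one _).symm
      _ ≤ (d:ℝ) ^ ((t+1)/2) := Real.rpow_le_rpow_of_exponent_le hD1 (by linarith)
  have hT1 : (d:ℝ) * K ≤ K * (d:ℝ) ^ ((t+1)/2) := by
    calc (d:ℝ) * K = K * (d:ℝ) := mul_comm _ _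
      _ ≤ K * (d:ℝ) ^ ((t+1)/2) := mul_le_mul_of_nonneg_left hdd hK
  have hT2 : (d:ℝ) * Real.log (1 + Real.log d)
      ≤ ((2:ℝ)^δd/δd) * (d:ℝ) ^ ((t+1)/2) := by
    have hld : Real.log d ≤ (d:ℝ) := by
      have := Real.log_le_sub_one_of_pos hD0
      linarith
    have e1 : Real.log (1 + Real.log d) ≤ Real.log (1 + (d:ℝ)) :=
      Real.log_le_log (by linarith) (by linarith)
    have e2 : Real.log (1 + (d:ℝ)) ≤ (1 + (d:ℝ)) ^ δd / δd :=
      log_le_rpow_div (by linarith) hδd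
    have e3 : (1 + (d:ℝ)) ^ δd ≤ (2*(d:ℝ)) ^ δd :=
      Real.rpow_le_rpow (by linarith) (by linarith) hδd.le
    have e4 : (2*(d:ℝ)) ^ δd = 2 ^ δd * (d:ℝ) ^ δd :=
      Real.mul_rpow (by norm_num) hD0.le
    have e5 : (d:ℝ) * (d:ℝ) ^ δd = (d:ℝ) ^ ((t+1)/2) := by
      calc (d:ℝ) * (d:ℝ) ^ δd = (d:ℝ) ^ (1:ℝ) * (d:ℝ) ^ δd := by rw [Real.rpow_one]
        _ = (d:ℝ) ^ (1 + δd) := (Real.rpow_add hD0 _ _).symm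
        _ = (d:ℝ) ^ ((t+1)/2) := by rw [hδddef]; congr 1; ring
    have chain : Real.log (1 + Real.log d) ≤ 2 ^ δd * (d:ℝ) ^ δd / δd := by
      have e23 : (1 + (d:ℝ)) ^ δd / δd ≤ (2*(d:ℝ)) ^ δd / δd := by
        exact (div_le_div_iff_of_pos_right hδd).mpr e3
      calc Real.log (1 + Real.log d) ≤ (1 + (d:ℝ)) ^ δd / δd := le_trans e1 e2
        _ ≤ (2*(d:ℝ)) ^ δd / δd := e23
        _ = 2 ^ δd * (d:ℝ) ^ δd / δd := by rw [e4]
    calc (d:ℝ) * Real.log (1 + Real.log d)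
        ≤ (d:ℝ) * (2 ^ δd * (d:ℝ) ^ δd / δd) :=
          mul_le_mul_of_nonneg_left chain (by positivity)
      _ = ((2:ℝ)^δd/δd) * ((d:ℝ) * (d:ℝ) ^ δd) := by ring
      _ = ((2:ℝ)^δd/δd) * (d:ℝ) ^ ((t+1)/2) := by rw [e5]
  have hT3 : (d:ℝ) * Real.log (1 + L)
      ≤ (1/δL) * ((d:ℝ) ^ ((t+1)/2) + (1+L) ^ (s/2)) := by
    have e1 : Real.log (1 + L) ≤ (1+L) ^ δL / δL := log_le_rpow_div (by linarith) hδL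
    have hb1 : (1:ℝ) ≤ (1+L) ^ δL := Real.one_le_rpow (by linarith) hδL.le
    have hconj : 1/((t+1)/2) + 1/r₁ ≤ 1 := by
      have hcalc : 1/((t+1)/2) + 1/r₁ = 1 := by
        rw [hr₁def]
        have h2 : (t+1)/2 - 1 ≠ 0 := ne_of_gt (by linarith)
        field_simp
        ring
      linarith
    have eab := ab_le_rpow_add hD1 hb1 ht₁0 hr₁pos hconj
    have e2 : ((1+L) ^ δL) ^ r₁ = (1+L) ^ (s/2) := by
      rw [← Real.rpow_mul (by linarith)]
      congr 1
      rw [hδLdef]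
      field_simp
    rw [e2] at eab
    calc (d:ℝ) * Real.log (1 + L) ≤ (d:ℝ) * ((1+L) ^ δL / δL) :=
          mul_le_mul_of_nonneg_left e1 (by positivity)
      _ = (1/δL) * ((d:ℝ) * (1+L) ^ δL) := by ring
      _ ≤ (1/δL) * ((d:ℝ) ^ ((t+1)/2) + (1+L) ^ (s/2)) :=
          mul_le_mul_of_nonneg_left eab (by positivity)
  have hStepD : (d:ℝ) * Real.log m ≤ K₁ * (d:ℝ) ^ ((t+1)/2) + K₂ * (1+L) ^ (s/2) := by
    have hdist : (d:ℝ) * Real.log m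
        ≤ (d:ℝ)*K + (d:ℝ)*Real.log (1 + Real.log d) + (d:ℝ)*Real.log (1 + L) := by
      have h := mul_le_mul_of_nonneg_left hlogm (le_of_lt hD0)
      nlinarith [h]
    have hexp1 : K₁ * (d:ℝ) ^ ((t+1)/2)
        = K * (d:ℝ) ^ ((t+1)/2) + ((2:ℝ)^δd/δd) * (d:ℝ) ^ ((t+1)/2)
          + (1/δL) * (d:ℝ) ^ ((t+1)/2) := by
      rw [hK₁def]; ring
    have hexp2 : (1/δL) * ((d:ℝ) ^ ((t+1)/2) + (1+L) ^ (s/2))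
        = (1/δL) * (d:ℝ) ^ ((t+1)/2) + (1/δL) * (1+L) ^ (s/2) := by ring
    rw [hexp2] at hT3
    rw [hexp1, hK₂def]
    linarith
  have hfin := hM (d:ℝ) L hD1 hL (by rw [hexpL]; exact hMle)
  calc Real.log (infoComp g ε d : ℝ) ≤ (d:ℝ) * Real.log m := hlogIC
    _ ≤ K₁ * (d:ℝ) ^ ((t+1)/2) + K₂ * (1+L) ^ (s/2) := hStepD
    _ ≤ η * ((1+L) ^ s + (d:ℝ) ^ t) := hfin
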